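/- The collection of sets Z ∪ {r} arising from good cuts on a rooted tree forms the independent sets of a matroid (a gammoid), and hence the greedy algorithm that repeatedly adds the minimum-weight edge e with C + e still good computes a minimum-weight good cut of any prescribed size on trees. -/

import Mathlib

open scoped Classical

/-- `Z ⊆ V \ {r}` induces a good cut `{s(v, parent v) : v ∈ Z}` on the rooted
tree: the components of the tree minus the cut admit representatives from
pairwise distinct candidate sets, one representative per component. -/
def GoodCut {V : Type*} [Fintype V] [DecidableEq V] (G : SimpleGraph V)
    {q : ℕ} (T : Fin q → Set V) (parent : V → V) (Z : Finset V) : Prop :=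
  ∃ idx : (G.deleteEdges ↑(Z.image fun v => s(v, parent v))).ConnectedComponent → Fin q,
    Function.Injective idx ∧
    ∃ rep : (G.deleteEdges ↑(Z.image fun v => s(v, parent v))).ConnectedComponent → V,
      ∀ K, rep K ∈ T (idx K) ∧ rep K ∈ K.supp


namespace Stmt3Aux
open SimpleGraph Finset

set_option linter.unusedVariables false
set_option linter.unusedSectionVars false

variable {V : Type*} [Fintype V] [DecidableEq V]

def top (r : V) (parent : V → V) (d : V → ℕ) (hd : ∀ v, v ≠ r → d (parent v) < d v)
    (Z : Finset V) (u : V) : V :=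
  if h : u ∈ insert r Z then u else top r parent d hd Z (parent u)
termination_by d u
decreasing_by exact hd u fun hr => h (by simp [hr])

variable {r : V} {parent : V → V} {d : V → ℕ} {hd : ∀ v, v ≠ r → d (parent v) < d v}

theorem top_mem (Z : Finset V) (u : V) : top r parent d hd Z u ∈ insert r Z := by
  rw [top]
  split_ifs with h
  · exact h
  · exact top_mem Z (parent u)
termination_by d u
decreasing_by exact hd u fun hr => h (by simp [hr])

theorem top_eq_self {Z : Finset V} {u : V} (h : u ∈ insert r Z) :
    top r parent d hd Z u = u := by
  rw [top]; simp [h]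


theorem top_not_mem {Z : Finset V} {u : V} (h : u ∉ insert r Z) :
    top r parent d hd Z u = top r parent d hd Z (parent u) := by
  rw [top]; simp [h]

theorem top_top {Z Z' : Finset V} (hZ : Z ⊆ Z') (u : V) :
    top r parent d hd Z (top r parent d hd Z' u) = top r parent d hd Z u := by
  by_cases h : u ∈ insert r Z'
  · rw [top_eq_self h]
  · have h2 : u ∉ insert r Z := fun hc => h (Finset.insert_subset_insert r hZ hc)
    rw [top_not_mem h, top_not_mem h2]
    exact top_top hZ (parent u)
termination_by d u
decreasing_by exact hd u fun hr => h (by simp [hr])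

theorem top_insert_cases {Z : Finset V} (z : V) (u : V) :
    top r parent d hd (insert z Z) u = z ∨
      top r parent d hd (insert z Z) u = top r parent d hd Z u := by
  by_cases h : u ∈ insert r (insert z Z)
  · by_cases hz : u = z
    · exact Or.inl (by rw [top_eq_self h, hz])
    · right
      have h2 : u ∈ insert r Z := by
        rcases Finset.mem_insert.1 h with h' | h'
        · simp [h']
        · rcases Finset.mem_insert.1 h' with h'' | h''
          · exact absurd h'' hz
          · simp [h'']
      rw [top_eq_self h, top_eq_self h2]
  · have h2 : u ∉ insert r Z := by
      intro hc
      rcases Finset.mem_insert.1 hc with h' | h'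
      · exact h (by simp [h'])
      · exact h (by simp [h'])
    rw [top_not_mem h, top_not_mem h2]
    exact top_insert_cases z (parent u)
termination_by d u
decreasing_by exact hd u fun hr => h (by simp [hr])

theorem top_eq_or_lt {Z : Finset V} (u : V) :
    top r parent d hd Z u = u ∨ d (top r parent d hd Z u) < d u := by
  by_cases h : u ∈ insert r Z
  · exact Or.inl (top_eq_self h)
  · right
    rw [top_not_mem h]
    have hlt := hd u fun hr => h (by simp [hr])
    rcases top_eq_or_lt (Z := Z) (parent u) with h' | h'
    · rw [h']; exact hlt
    · exact h'.trans hlt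
termination_by d u
decreasing_by exact hd u fun hr => h (by simp [hr])


section Graph

variable {G : SimpleGraph V} {r : V} {parent : V → V}

theorem parent_unique (hG : G.IsTree)
    (hpar : ∀ v, v ≠ r → G.Adj v (parent v) ∧ G.dist (parent v) r + 1 = G.dist v r)
    {x y : V} (hadj : G.Adj x y) (hdist : G.dist y r + 1 = G.dist x r) : y = parent x := by
  have hx : x ≠ r := by
    rintro rfl
    simp [SimpleGraph.dist_self] at hdist
  obtain ⟨hpx, hdp⟩ := hpar x hx
  by_contra hne
  have hb := (isAcyclic_iff_forall_adj_isBridge.mp hG.IsAcyclic) hpx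
  rw [isBridge_iff_adj_and_forall_walk_mem_edges] at hb
  obtain ⟨wy, hwy⟩ := hG.isConnected.exists_walk_length_eq_dist y r
  obtain ⟨wp, hwp⟩ := hG.isConnected.exists_walk_length_eq_dist (parent x) r
  have hmem := hb ((Walk.cons hadj wy).append wp.reverse)
  simp only [Walk.edges_append, Walk.edges_cons, List.mem_append, List.mem_cons] at hmem
  rcases hmem with (hmem | hmem) | hmem
  · rw [Sym2.eq_iff] at hmem
    rcases hmem with ⟨-, h2⟩ | ⟨h1, -⟩
    · exact hne h2.symm
    · exact hadj.ne h1
  · have hsup : x ∈ wy.support := wy.fst_mem_support_of_mem_edges hmem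
    have h1 : G.dist x r ≤ (wy.dropUntil x hsup).length := SimpleGraph.dist_le _
    have h2 : (wy.takeUntil x hsup).length + (wy.dropUntil x hsup).length = wy.length := by
      have := congr_arg Walk.length (wy.take_spec hsup)
      rwa [Walk.length_append] at this
    omega
  · rw [Walk.edges_reverse, List.mem_reverse] at hmem
    have hsup : x ∈ wp.support := wp.fst_mem_support_of_mem_edges hmem
    have h1 : G.dist x r ≤ (wp.dropUntil x hsup).length := SimpleGraph.dist_le _
    have h2 : (wp.takeUntil x hsup).length + (wp.dropUntil x hsup).length = wp.length := by
      have := congr_arg Walk.length (wp.take_spec hsup)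
      rwa [Walk.length_append] at this
    omega

theorem adj_dist_ne (hG : G.IsTree) {x y : V} (hadj : G.Adj x y) :
    G.dist x r ≠ G.dist y r := by
  intro heq
  have hb := (isAcyclic_iff_forall_adj_isBridge.mp hG.IsAcyclic) hadj
  rw [isBridge_iff_adj_and_forall_walk_mem_edges] at hb
  obtain ⟨wx, hwx⟩ := hG.isConnected.exists_walk_length_eq_dist x r
  obtain ⟨wy, hwy⟩ := hG.isConnected.exists_walk_length_eq_dist y r
  have hxy : 1 ≤ G.dist x y := hG.isConnected.pos_dist_of_ne hadj.ne
  have hmem := hb (wx.append wy.reverse)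
  rw [Walk.edges_append, List.mem_append] at hmem
  rcases hmem with hmem | hmem
  · have hsup : y ∈ wx.support := wx.snd_mem_support_of_mem_edges hmem
    have h1 : G.dist y r ≤ (wx.dropUntil y hsup).length := SimpleGraph.dist_le _
    have h3 : G.dist x y ≤ (wx.takeUntil y hsup).length := SimpleGraph.dist_le _
    have h2 : (wx.takeUntil y hsup).length + (wx.dropUntil y hsup).length = wx.length := by
      have := congr_arg Walk.length (wx.take_spec hsup)
      rwa [Walk.length_append] at this
    omega
  · rw [Walk.edges_reverse, List.mem_reverse] at hmem
    have hsup : x ∈ wy.support := wy.fst_mem_support_of_mem_edges hmem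
    have h1 : G.dist x r ≤ (wy.dropUntil x hsup).length := SimpleGraph.dist_le _
    have h3 : G.dist y x ≤ (wy.takeUntil x hsup).length := SimpleGraph.dist_le _
    have h2 : (wy.takeUntil x hsup).length + (wy.dropUntil x hsup).length = wy.length := by
      have := congr_arg Walk.length (wy.take_spec hsup)
      rwa [Walk.length_append] at this
    have : 1 ≤ G.dist y x := hG.isConnected.pos_dist_of_ne hadj.ne.symm
    omega

theorem adj_classify (hG : G.IsTree)
    (hpar : ∀ v, v ≠ r → G.Adj v (parent v) ∧ G.dist (parent v) r + 1 = G.dist v r)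
    {x y : V} (hadj : G.Adj x y) : y = parent x ∨ x = parent y := by
  have h1 : G.dist x r ≤ G.dist x y + G.dist y r := hG.isConnected.dist_triangle
  have h2 : G.dist y r ≤ G.dist y x + G.dist x r := hG.isConnected.dist_triangle
  have h3 : G.dist x y ≤ 1 := SimpleGraph.dist_le (Walk.cons hadj Walk.nil)
  have h4 : G.dist y x ≤ 1 := SimpleGraph.dist_le (Walk.cons hadj.symm Walk.nil)
  have h5 := adj_dist_ne (r := r) hG hadj
  rcases (by omega : G.dist y r + 1 = G.dist x r ∨ G.dist x r + 1 = G.dist y r) with h | h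
  · exact Or.inl (parent_unique hG hpar hadj h)
  · exact Or.inr (parent_unique hG hpar hadj.symm h)

end Graph

theorem hdOf (G : SimpleGraph V) {r : V} {parent : V → V}
    (hpar : ∀ v, v ≠ r → G.Adj v (parent v) ∧ G.dist (parent v) r + 1 = G.dist v r) :
    ∀ v, v ≠ r → (fun u => G.dist u r) (parent v) < (fun u => G.dist u r) v :=
  fun v hv => by have := (hpar v hv).2; simp only; omega

/-- `top` specialized to the graph distance. -/
noncomputable def gtop (G : SimpleGraph V) (r : V) (parent : V → V)
    (hpar : ∀ v, v ≠ r → G.Adj v (parent v) ∧ G.dist (parent v) r + 1 = G.dist v r)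
    (Z : Finset V) (u : V) : V :=
  top r parent (fun u => G.dist u r) (hdOf G hpar) Z u

/-- The graph minus the cut edges determined by `Z`. -/
def HH (G : SimpleGraph V) (parent : V → V) (Z : Finset V) : SimpleGraph V :=
  G.deleteEdges ↑(Z.image fun v => s(v, parent v))

section GTop

variable {G : SimpleGraph V} {r : V} {parent : V → V}
variable (hpar : ∀ v, v ≠ r → G.Adj v (parent v) ∧ G.dist (parent v) r + 1 = G.dist v r)

theorem gtop_mem (Z : Finset V) (u : V) : gtop G r parent hpar Z u ∈ insert r Z := top_mem Z u
theorem gtop_eq_self {Z : Finset V} {u : V} (h : u ∈ insert r Z) :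
    gtop G r parent hpar Z u = u := top_eq_self h
theorem gtop_top {Z Z' : Finset V} (hZ : Z ⊆ Z') (u : V) :
    gtop G r parent hpar Z (gtop G r parent hpar Z' u) = gtop G r parent hpar Z u := top_top hZ u
theorem gtop_insert_cases {Z : Finset V} (z : V) (u : V) :
    gtop G r parent hpar (insert z Z) u = z ∨
      gtop G r parent hpar (insert z Z) u = gtop G r parent hpar Z u := top_insert_cases z u
theorem gtop_eq_or_lt {Z : Finset V} (u : V) :
    gtop G r parent hpar Z u = u ∨ G.dist (gtop G r parent hpar Z u) r < G.dist u r :=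
  top_eq_or_lt u

include hpar in
theorem cut_not_mem {Z : Finset V} {x : V} (hx : x ≠ r) (hxZ : x ∉ Z) (hrZ : r ∉ Z) :
    s(x, parent x) ∉ (↑(Z.image fun v => s(v, parent v)) : Set (Sym2 V)) := by
  intro hmem
  rw [Finset.mem_coe, Finset.mem_image] at hmem
  obtain ⟨z, hz, hez⟩ := hmem
  have hzr : z ≠ r := fun h => hrZ (h ▸ hz)
  rw [Sym2.eq_iff] at hez
  rcases hez with ⟨h1, -⟩ | ⟨h1, h2⟩
  · exact hxZ (h1 ▸ hz)
  · have d1 := (hpar z hzr).2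
    have d2 := (hpar x hx).2
    rw [h2] at d1
    rw [← h1] at d2
    omega

include hpar in
theorem HH_adj_parent {Z : Finset V} {x : V} (hx : x ≠ r) (hxZ : x ∉ Z) (hrZ : r ∉ Z) :
    (HH G parent Z).Adj x (parent x) := by
  rw [HH, SimpleGraph.deleteEdges_adj]
  exact ⟨(hpar x hx).1, cut_not_mem hpar hx hxZ hrZ⟩

theorem reach_gtop {Z : Finset V} (hrZ : r ∉ Z) (u : V) :
    (HH G parent Z).Reachable u (gtop G r parent hpar Z u) := by
  by_cases h : u ∈ insert r Z
  · rw [gtop_eq_self hpar h]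
  · have hur : u ≠ r := fun hc => h (by simp [hc])
    have huZ : u ∉ Z := fun hc => h (by simp [hc])
    rw [gtop, top_not_mem h]
    exact (HH_adj_parent hpar hur huZ hrZ).reachable.trans (reach_gtop hrZ (parent u))
termination_by G.dist u r
decreasing_by exact hdOf G hpar u fun hc => h (by simp [hc])

variable (hG : G.IsTree)
include hpar hG

theorem gtop_adj {Z : Finset V} (hrZ : r ∉ Z) {a b : V} (hab : (HH G parent Z).Adj a b) :
    gtop G r parent hpar Z a = gtop G r parent hpar Z b := by
  rw [HH, SimpleGraph.deleteEdges_adj] at hab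
  obtain ⟨hadj, hnot⟩ := hab
  have key : ∀ x y : V, G.Adj x y → y = parent x → x ≠ r →
      ¬ s(x, y) ∈ (↑(Z.image fun v => s(v, parent v)) : Set (Sym2 V)) →
      gtop G r parent hpar Z x = gtop G r parent hpar Z y := by
    intro x y hxy hpy hxr hns
    have hxZ : x ∉ Z := by
      intro hc
      exact hns (by rw [hpy]; exact Finset.mem_coe.2 (Finset.mem_image_of_mem _ hc))
    have hxi : x ∉ insert r Z := by simp [hxr, hxZ]
    rw [gtop, top_not_mem hxi, ← hpy]
    rfl
  have h1 : G.dist a r ≤ G.dist a b + G.dist b r := hG.isConnected.dist_triangle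
  have h2 : G.dist b r ≤ G.dist b a + G.dist a r := hG.isConnected.dist_triangle
  have h3 : G.dist a b ≤ 1 := SimpleGraph.dist_le (Walk.cons hadj Walk.nil)
  have h4 : G.dist b a ≤ 1 := SimpleGraph.dist_le (Walk.cons hadj.symm Walk.nil)
  have h5 := adj_dist_ne (r := r) hG hadj
  rcases (by omega : G.dist b r + 1 = G.dist a r ∨ G.dist a r + 1 = G.dist b r) with h | h
  · have har : a ≠ r := by rintro rfl; simp [SimpleGraph.dist_self] at h
    exact key a b hadj (parent_unique hG hpar hadj h) har hnot
  · have hbr : b ≠ r := by rintro rfl; simp [SimpleGraph.dist_self] at h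
    have := key b a hadj.symm (parent_unique hG hpar hadj.symm h) hbr
      (by rwa [Sym2.eq_swap])
    exact this.symm

theorem gtop_walk {Z : Finset V} (hrZ : r ∉ Z) {a b : V} (p : (HH G parent Z).Walk a b) :
    gtop G r parent hpar Z a = gtop G r parent hpar Z b := by
  induction p with
  | nil => rfl
  | cons hadj p ih => exact (gtop_adj hpar hG hrZ hadj).trans ih

theorem gtop_reach {Z : Finset V} (hrZ : r ∉ Z) {a b : V}
    (h : (HH G parent Z).Reachable a b) :
    gtop G r parent hpar Z a = gtop G r parent hpar Z b := by
  obtain ⟨p⟩ := h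
  exact gtop_walk hpar hG hrZ p

end GTop

/-- Matching formulation of goodness. -/
def GoodM (G : SimpleGraph V) (r : V) (parent : V → V)
    (hpar : ∀ v, v ≠ r → G.Adj v (parent v) ∧ G.dist (parent v) r + 1 = G.dist v r)
    {q : ℕ} (T : Fin q → Set V) (Z : Finset V) : Prop :=
  ∃ f : V → Fin q, Set.InjOn f ↑(insert r Z) ∧
    ∀ v ∈ insert r Z, ∃ u, u ∈ T (f v) ∧ gtop G r parent hpar Z u = v

section Equiv
variable {G : SimpleGraph V} {r : V} {parent : V → V}
variable (hpar : ∀ v, v ≠ r → G.Adj v (parent v) ∧ G.dist (parent v) r + 1 = G.dist v r)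
variable (hG : G.IsTree)
include hpar hG

theorem goodCut_iff_goodM {q : ℕ} (T : Fin q → Set V) {Z : Finset V} (hrZ : r ∉ Z) :
    GoodCut G T parent Z ↔ GoodM G r parent hpar T Z := by
  constructor
  · rintro ⟨idx, hinj, rep, hrep⟩
    refine ⟨fun v => idx ((HH G parent Z).connectedComponentMk v), ?_, ?_⟩
    · intro v hv v' hv' hf
      have heq : (HH G parent Z).connectedComponentMk v
          = (HH G parent Z).connectedComponentMk v' := hinj hf
      have := gtop_reach hpar hG hrZ (ConnectedComponent.exact heq)
      rwa [gtop_eq_self hpar (Finset.mem_coe.1 hv),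
        gtop_eq_self hpar (Finset.mem_coe.1 hv')] at this
    · intro v hv
      obtain ⟨hT, hsupp⟩ := hrep ((HH G parent Z).connectedComponentMk v)
      refine ⟨rep ((HH G parent Z).connectedComponentMk v), hT, ?_⟩
      have hsupp : (HH G parent Z).connectedComponentMk (rep ((HH G parent Z).connectedComponentMk v))
          = (HH G parent Z).connectedComponentMk v := hsupp
      have := gtop_reach hpar hG hrZ (ConnectedComponent.exact hsupp)
      rwa [gtop_eq_self hpar hv] at this
  · rintro ⟨f, hinj, hrep⟩
    have tcW : ∀ (v w : V) (p : (HH G parent Z).Walk v w), p.IsPath →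
        gtop G r parent hpar Z v = gtop G r parent hpar Z w :=
      fun v w p _ => gtop_walk hpar hG hrZ p
    set tc : (HH G parent Z).ConnectedComponent → V :=
      ConnectedComponent.lift (gtop G r parent hpar Z) tcW with htc
    have htc1 : ∀ K, tc K ∈ insert r Z := by
      refine ConnectedComponent.ind fun v => ?_
      rw [htc, ConnectedComponent.lift_mk]
      exact gtop_mem hpar Z v
    have htc2 : ∀ K, (HH G parent Z).connectedComponentMk (tc K) = K := by
      refine ConnectedComponent.ind fun v => ?_
      rw [htc, ConnectedComponent.lift_mk]
      exact (ConnectedComponent.sound (reach_gtop hpar hrZ v)).symm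
    refine ⟨fun K => f (tc K), ?_, fun K => Classical.choose (hrep (tc K) (htc1 K)), fun K => ?_⟩
    · intro K K' hf
      have := hinj (Finset.mem_coe.2 (htc1 K)) (Finset.mem_coe.2 (htc1 K')) hf
      rw [← htc2 K, ← htc2 K', this]
    · obtain ⟨hT, htop⟩ := Classical.choose_spec (hrep (tc K) (htc1 K))
      refine ⟨hT, ?_⟩
      have hre := ConnectedComponent.sound
        (reach_gtop hpar hrZ (Classical.choose (hrep (tc K) (htc1 K))))
      have goal2 : (HH G parent Z).connectedComponentMk
          (Classical.choose (hrep (tc K) (htc1 K))) = K :=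
        (hre.trans (congrArg _ htop)).trans (htc2 K)
      exact (ConnectedComponent.mem_supp_iff _ _).2 goal2

end Equiv

section Counting

variable {G : SimpleGraph V} {r : V} {parent : V → V}

variable (hpar : ∀ v, v ≠ r → G.Adj v (parent v) ∧ G.dist (parent v) r + 1 = G.dist v r)
variable {q : ℕ} (T : Fin q → Set V)

/-- colors meeting `Y`. -/
noncomputable def GSet (Y : Finset V) : Finset (Fin q) :=
  Finset.univ.filter fun i => ∃ u ∈ Y, u ∈ T i

/-- elements of `insert r Z` whose component is inside `Y`. -/
noncomputable def FSet (Z Y : Finset V) : Finset V :=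
  (insert r Z).filter fun v => ∀ u, gtop G r parent hpar Z u = v → u ∈ Y

theorem GSet_union (A B : Finset V) : GSet T (A ∪ B) = GSet T A ∪ GSet T B := by
  ext i
  simp only [GSet, Finset.mem_filter, Finset.mem_union, Finset.mem_univ, true_and]
  constructor
  · rintro ⟨u, hu | hu, hT⟩
    · exact Or.inl ⟨u, hu, hT⟩
    · exact Or.inr ⟨u, hu, hT⟩
  · rintro (⟨u, hu, hT⟩ | ⟨u, hu, hT⟩)
    · exact ⟨u, Or.inl hu, hT⟩
    · exact ⟨u, Or.inr hu, hT⟩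

theorem GSet_inter (A B : Finset V) : GSet T (A ∩ B) ⊆ GSet T A ∩ GSet T B := by
  intro i hi
  simp only [GSet, Finset.mem_filter, Finset.mem_inter, Finset.mem_univ, true_and] at hi ⊢
  obtain ⟨u, hu, hT⟩ := hi
  exact ⟨⟨u, hu.1, hT⟩, ⟨u, hu.2, hT⟩⟩

theorem gcount_submod (A B : Finset V) :
    (GSet T (A ∪ B)).card + (GSet T (A ∩ B)).card ≤ (GSet T A).card + (GSet T B).card := by
  calc (GSet T (A ∪ B)).card + (GSet T (A ∩ B)).card
      ≤ (GSet T A ∪ GSet T B).card + (GSet T A ∩ GSet T B).card := by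
        refine Nat.add_le_add ?_ (Finset.card_le_card (GSet_inter T A B))
        rw [GSet_union]
    _ = (GSet T A).card + (GSet T B).card := Finset.card_union_add_card_inter _ _

theorem FSet_inter (Z A B : Finset V) :
    FSet hpar (Z) (A ∩ B) = FSet hpar Z A ∩ FSet hpar Z B := by
  ext v
  simp only [FSet, Finset.mem_filter, Finset.mem_inter]
  constructor
  · rintro ⟨hv, h⟩
    exact ⟨⟨hv, fun u hu => (h u hu).1⟩, ⟨hv, fun u hu => (h u hu).2⟩⟩
  · rintro ⟨⟨hv, h1⟩, ⟨-, h2⟩⟩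
    exact ⟨hv, fun u hu => ⟨h1 u hu, h2 u hu⟩⟩

theorem FSet_union (Z A B : Finset V) :
    FSet hpar Z A ∪ FSet hpar Z B ⊆ FSet hpar Z (A ∪ B) := by
  intro v hv
  simp only [FSet, Finset.mem_filter, Finset.mem_union] at hv ⊢
  rcases hv with ⟨hv, h⟩ | ⟨hv, h⟩
  · exact ⟨hv, fun u hu => Or.inl (h u hu)⟩
  · exact ⟨hv, fun u hu => Or.inr (h u hu)⟩

theorem fcount_supermod (Z A B : Finset V) :
    (FSet hpar Z A).card + (FSet hpar Z B).card ≤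
      (FSet hpar Z (A ∪ B)).card + (FSet hpar Z (A ∩ B)).card := by
  calc (FSet hpar Z A).card + (FSet hpar Z B).card
      = (FSet hpar Z A ∪ FSet hpar Z B).card + (FSet hpar Z A ∩ FSet hpar Z B).card :=
        (Finset.card_union_add_card_inter _ _).symm
    _ ≤ _ := by
        refine Nat.add_le_add (Finset.card_le_card (FSet_union hpar Z A B)) ?_
        rw [FSet_inter]

theorem FSet_mono {Z Z' : Finset V} (hZ : Z ⊆ Z') (Y : Finset V) :
    FSet hpar Z Y ⊆ FSet hpar Z' Y := by
  intro v hv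
  simp only [FSet, Finset.mem_filter] at hv ⊢
  obtain ⟨hv1, hv2⟩ := hv
  refine ⟨Finset.insert_subset_insert r hZ hv1, fun u hu => ?_⟩
  apply hv2
  rw [← gtop_top hpar hZ u, hu, gtop_eq_self hpar hv1]

theorem goodM_iff_def {Z : Finset V} (hrZ : r ∉ Z) :
    GoodM G r parent hpar T Z ↔ ∀ Y : Finset V, (FSet hpar Z Y).card ≤ (GSet T Y).card := by
  constructor
  · rintro ⟨f, hinj, hrep⟩ Y
    have himg : (FSet hpar Z Y).image f ⊆ GSet T Y := by
      intro i hi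
      rw [Finset.mem_image] at hi
      obtain ⟨v, hv, rfl⟩ := hi
      simp only [FSet, Finset.mem_filter] at hv
      obtain ⟨hv1, hv2⟩ := hv
      obtain ⟨u, hu1, hu2⟩ := hrep v hv1
      simp only [GSet, Finset.mem_filter, Finset.mem_univ, true_and]
      exact ⟨u, hv2 u hu2, hu1⟩
    calc (FSet hpar Z Y).card = ((FSet hpar Z Y).image f).card := by
          rw [Finset.card_image_of_injOn]
          intro a ha b hb hab
          refine hinj ?_ ?_ hab
          · exact Finset.mem_coe.2 ((Finset.filter_subset _ _) ha)
          · exact Finset.mem_coe.2 ((Finset.filter_subset _ _) hb)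
      _ ≤ (GSet T Y).card := Finset.card_le_card himg
  · intro hdef
    have hall : ∀ A : Finset {v // v ∈ insert r Z},
        A.card ≤ (A.biUnion fun v =>
          (Finset.univ.filter fun i => ∃ u, u ∈ T i ∧ gtop G r parent hpar Z u = ↑v)).card := by
      intro A
      set Y : Finset V := Finset.univ.filter
        (fun u => ∃ v ∈ A, gtop G r parent hpar Z u = ↑v) with hY
      have h1 : A.image (Subtype.val) ⊆ FSet hpar Z Y := by
        intro v hv
        rw [Finset.mem_image] at hv
        obtain ⟨a, ha, rfl⟩ := hv
        simp only [FSet, Finset.mem_filter]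
        refine ⟨a.2, fun u hu => ?_⟩
        rw [hY, Finset.mem_filter]
        exact ⟨Finset.mem_univ u, ⟨a, ha, hu⟩⟩
      have h2 : GSet T Y ⊆ A.biUnion fun v =>
          (Finset.univ.filter fun i => ∃ u, u ∈ T i ∧ gtop G r parent hpar Z u = ↑v) := by
        intro i hi
        simp only [GSet, Finset.mem_filter, Finset.mem_univ, true_and] at hi
        obtain ⟨u, hu, hT⟩ := hi
        rw [hY, Finset.mem_filter] at hu
        obtain ⟨-, v, hv, htop⟩ := hu
        rw [Finset.mem_biUnion]
        exact ⟨v, hv, by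
          simp only [Finset.mem_filter, Finset.mem_univ, true_and]
          exact ⟨u, hT, htop⟩⟩
      calc A.card = (A.image Subtype.val).card :=
            (Finset.card_image_of_injective _ Subtype.val_injective).symm
        _ ≤ (FSet hpar Z Y).card := Finset.card_le_card h1
        _ ≤ (GSet T Y).card := hdef Y
        _ ≤ _ := Finset.card_le_card h2
    obtain ⟨f0, hf0inj, hf0⟩ := (Finset.all_card_le_biUnion_card_iff_exists_injective _).1 hall
    refine ⟨fun v => if h : v ∈ insert r Z then f0 ⟨v, h⟩ else f0 ⟨r, Finset.mem_insert_self r Z⟩,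
      ?_, ?_⟩
    · intro v hv v' hv' hf
      rw [Finset.mem_coe] at hv hv'
      simp only [dif_pos hv, dif_pos hv'] at hf
      exact congrArg Subtype.val (hf0inj hf)
    · intro v hv
      have := hf0 ⟨v, hv⟩
      simp only [Finset.mem_filter, Finset.mem_univ, true_and] at this
      obtain ⟨u, hu1, hu2⟩ := this
      exact ⟨u, by simpa only [dif_pos hv] using hu1, hu2⟩


theorem not_mem_insert_r {Z : Finset V} {z : V} (hz : z ∉ Z) (hzr : z ≠ r) :
    z ∉ insert r Z := by simp [hzr, hz]

theorem step_le {Z : Finset V} {z : V} (hrZ : r ∉ Z) (hz : z ∉ Z) (hzr : z ≠ r) (Y : Finset V) :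
    (FSet hpar (insert z Z) Y).card ≤ (FSet hpar Z Y).card + 1 := by
  have hzi : z ∉ insert r Z := not_mem_insert_r hz hzr
  by_cases hzF : ∀ u, gtop G r parent hpar (insert z Z) u = z → u ∈ Y
  · have hsub : FSet hpar (insert z Z) Y ⊆ insert z (FSet hpar Z Y) := by
      intro v hv
      by_cases hvz : v = z
      · simp [hvz]
      · simp only [FSet, Finset.mem_filter] at hv
        obtain ⟨hv1, hv2⟩ := hv
        refine Finset.mem_insert_of_mem ?_
        simp only [FSet, Finset.mem_filter]
        constructor
        · rcases Finset.mem_insert.1 hv1 with h | h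
          · simp [h]
          · rcases Finset.mem_insert.1 h with h' | h'
            · exact absurd h' hvz
            · simp [h']
        · intro u hu
          rcases gtop_insert_cases hpar z u with h | h
          · exact hzF u h
          · exact hv2 u (h.trans hu)
    calc (FSet hpar (insert z Z) Y).card ≤ (insert z (FSet hpar Z Y)).card :=
          Finset.card_le_card hsub
      _ ≤ (FSet hpar Z Y).card + 1 := Finset.card_insert_le _ _
  · have hsub : FSet hpar (insert z Z) Y ⊆
        insert (gtop G r parent hpar Z z) (FSet hpar Z Y) := by
      intro v hv
      by_cases hvg : v = gtop G r parent hpar Z z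
      · simp [hvg]
      · simp only [FSet, Finset.mem_filter] at hv
        obtain ⟨hv1, hv2⟩ := hv
        have hvz : v ≠ z := by
          rintro rfl
          exact hzF fun u hu => hv2 u hu
        refine Finset.mem_insert_of_mem ?_
        simp only [FSet, Finset.mem_filter]
        constructor
        · rcases Finset.mem_insert.1 hv1 with h | h
          · simp [h]
          · rcases Finset.mem_insert.1 h with h' | h'
            · exact absurd h' hvz
            · simp [h']
        · intro u hu
          rcases gtop_insert_cases hpar z u with h | h
          · exfalso
            have := gtop_top hpar (Finset.subset_insert z Z) u
            rw [h, hu] at this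
            exact hvg this.symm
          · exact hv2 u (h.trans hu)
    calc (FSet hpar (insert z Z) Y).card ≤ _ := Finset.card_le_card hsub
      _ ≤ (FSet hpar Z Y).card + 1 := Finset.card_insert_le _ _

theorem crit {Z : Finset V} {z : V} (hrZ : r ∉ Z) (hz : z ∉ Z) (hzr : z ≠ r) {Y : Finset V}
    (hlt : (FSet hpar Z Y).card < (FSet hpar (insert z Z) Y).card) :
    (∀ u, gtop G r parent hpar (insert z Z) u = z → u ∈ Y) ∨
      (∀ u, gtop G r parent hpar (insert z Z) u = gtop G r parent hpar Z z → u ∈ Y) := by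
  by_contra hcon
  push_neg at hcon
  obtain ⟨⟨u1, hu1, hu1Y⟩, ⟨u2, hu2, hu2Y⟩⟩ := hcon
  have hsub : FSet hpar (insert z Z) Y ⊆ FSet hpar Z Y := by
    intro v hv
    simp only [FSet, Finset.mem_filter] at hv
    obtain ⟨hv1, hv2⟩ := hv
    have hvz : v ≠ z := by
      rintro rfl
      exact hu1Y (hv2 u1 hu1)
    have hvg : v ≠ gtop G r parent hpar Z z := by
      rintro rfl
      exact hu2Y (hv2 u2 hu2)
    simp only [FSet, Finset.mem_filter]
    constructor
    · rcases Finset.mem_insert.1 hv1 with h | h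
      · simp [h]
      · rcases Finset.mem_insert.1 h with h' | h'
        · exact absurd h' hvz
        · simp [h']
    · intro u hu
      rcases gtop_insert_cases hpar z u with h | h
      · exfalso
        have := gtop_top hpar (Finset.subset_insert z Z) u
        rw [h, hu] at this
        exact hvg this.symm
      · exact hv2 u (h.trans hu)
  exact absurd (Finset.card_le_card hsub) (by omega)

theorem step_ge {Z1 Z : Finset V} {z : V} (hZ1 : Z1 ⊆ Z) (hrZ : r ∉ Z) (hz : z ∉ Z)
    (hzr : z ≠ r) {Y : Finset V}
    (hstar : (∀ u, gtop G r parent hpar (insert z Z1) u = z → u ∈ Y) ∨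
      (∀ u, gtop G r parent hpar (insert z Z1) u = gtop G r parent hpar Z1 z → u ∈ Y)) :
    (FSet hpar Z Y).card + 1 ≤ (FSet hpar (insert z Z) Y).card := by
  have hzi : z ∉ insert r Z := not_mem_insert_r hz hzr
  have hz1 : z ∉ Z1 := fun h => hz (hZ1 h)
  have hzi1 : z ∉ insert r Z1 := not_mem_insert_r hz1 hzr
  have hmono : FSet hpar Z Y ⊆ FSet hpar (insert z Z) Y :=
    FSet_mono hpar (Finset.subset_insert z Z) Y
  have hsub' : insert z Z1 ⊆ insert z Z := Finset.insert_subset_insert z hZ1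
  have key : ∃ w, w ∉ FSet hpar Z Y ∧ insert w (FSet hpar Z Y) ⊆ FSet hpar (insert z Z) Y := by
    have zmem_of : (∀ u, gtop G r parent hpar (insert z Z) u = z → u ∈ Y) →
        ∃ w, w ∉ FSet hpar Z Y ∧ insert w (FSet hpar Z Y) ⊆ FSet hpar (insert z Z) Y := by
      intro hzm
      refine ⟨z, ?_, ?_⟩
      · simp only [FSet, Finset.mem_filter]
        exact fun hc => hzi hc.1
      · refine Finset.insert_subset ?_ hmono
        simp only [FSet, Finset.mem_filter]
        exact ⟨Finset.mem_insert_of_mem (Finset.mem_insert_self z Z), hzm⟩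
    rcases hstar with hA | hB
    · refine zmem_of fun u hu => hA u ?_
      have := gtop_top hpar hsub' u
      rw [hu, gtop_eq_self hpar (Finset.mem_insert_of_mem (Finset.mem_insert_self z Z1))] at this
      exact this.symm
    · set v0 := gtop G r parent hpar Z z with hv0def
      by_cases hv0 : v0 ∈ FSet hpar Z Y
      · refine zmem_of fun u hu => ?_
        simp only [FSet, Finset.mem_filter] at hv0
        refine hv0.2 u ?_
        have := gtop_top hpar (Finset.subset_insert z Z) u
        rw [hu] at this
        exact this.symm
      · refine ⟨v0, hv0, ?_⟩
        refine Finset.insert_subset ?_ hmono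
        simp only [FSet, Finset.mem_filter]
        have hv0mem : v0 ∈ insert r Z := gtop_mem hpar Z z
        have hv0z : v0 ≠ z := fun h => hzi (h ▸ hv0mem)
        constructor
        · rcases Finset.mem_insert.1 hv0mem with h | h
          · simp [h]
          · exact Finset.mem_insert_of_mem (Finset.mem_insert_of_mem h)
        · intro u hu
          have hkey : gtop G r parent hpar (insert z Z1) v0 = gtop G r parent hpar Z1 z := by
            rcases gtop_insert_cases hpar (Z := Z1) z v0 with h | h
            · exfalso
              rcases gtop_eq_or_lt hpar (Z := insert z Z1) v0 with h' | h'
              · exact hv0z (h ▸ h').symm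
              · rw [h] at h'
                rcases gtop_eq_or_lt hpar (Z := Z) z with h'' | h'' 
                · exact hv0z (by rw [hv0def, h''])
                · rw [← hv0def] at h''
                  omega
            · rw [h, hv0def, gtop_top hpar hZ1 z]
          refine hB u ?_
          have := gtop_top hpar hsub' u
          rw [hu] at this
          rw [← this, hkey]
  obtain ⟨w, hw1, hw2⟩ := key
  calc (FSet hpar Z Y).card + 1 = (insert w (FSet hpar Z Y)).card :=
        (Finset.card_insert_of_notMem hw1).symm
    _ ≤ _ := Finset.card_le_card hw2

theorem goodM_subset {Z Z' : Finset V} (hZ : Z' ⊆ Z) (hrZ : r ∉ Z)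
    (h : GoodM G r parent hpar T Z) : GoodM G r parent hpar T Z' := by
  obtain ⟨f, hinj, hrep⟩ := h
  refine ⟨f, hinj.mono ?_, fun v hv => ?_⟩
  · exact Finset.coe_subset.2 (Finset.insert_subset_insert r hZ)
  · obtain ⟨u, hu1, hu2⟩ := hrep v (Finset.insert_subset_insert r hZ hv)
    refine ⟨u, hu1, ?_⟩
    have := gtop_top hpar hZ u
    rw [hu2, gtop_eq_self hpar hv] at this
    exact this.symm

theorem exchangeM {Z1 Z2 : Finset V} (h1 : r ∉ Z1) (h2 : r ∉ Z2)
    (g1 : GoodM G r parent hpar T Z1) (g2 : GoodM G r parent hpar T Z2)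
    (hcard : Z1.card < Z2.card) :
    ∃ z ∈ Z2, z ∉ Z1 ∧ GoodM G r parent hpar T (insert z Z1) := by
  by_contra hcon
  push_neg at hcon
  set D := Z2 \ Z1 with hD
  have hDr : ∀ z ∈ D, z ∈ Z2 ∧ z ∉ Z1 ∧ z ≠ r := by
    intro z hz
    rw [hD, Finset.mem_sdiff] at hz
    exact ⟨hz.1, hz.2, fun h => h2 (h ▸ hz.1)⟩
  have hzprop : ∀ z ∈ D, ∃ Y : Finset V,
      (GSet T Y).card < (FSet hpar (insert z Z1) Y).card := by
    intro z hz
    obtain ⟨hz2, hz1, hzr⟩ := hDr z hz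
    have hr' : r ∉ insert z Z1 := by simp [h1, Ne.symm hzr]
    have := hcon z hz2 hz1
    rw [goodM_iff_def hpar T hr'] at this
    push_neg at this
    obtain ⟨Y, hY⟩ := this
    exact ⟨Y, hY⟩
  choose! Yf hYf using hzprop
  have d1 := (goodM_iff_def hpar T h1).1 g1
  have d2 := (goodM_iff_def hpar T h2).1 g2
  have tight : ∀ z ∈ D, (GSet T (Yf z)).card ≤ (FSet hpar Z1 (Yf z)).card := by
    intro z hz
    obtain ⟨hz2, hz1, hzr⟩ := hDr z hz
    have h5 := hYf z hz
    have h6 := step_le hpar h1 hz1 hzr (Yf z)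
    omega
  have star : ∀ z ∈ D, (∀ u, gtop G r parent hpar (insert z Z1) u = z → u ∈ Yf z) ∨
      (∀ u, gtop G r parent hpar (insert z Z1) u = gtop G r parent hpar Z1 z → u ∈ Yf z) := by
    intro z hz
    obtain ⟨hz2, hz1, hzr⟩ := hDr z hz
    refine crit hpar h1 hz1 hzr ?_
    have := d1 (Yf z)
    have := hYf z hz
    omega
  set Ystar := D.sup Yf with hYstar
  have tightU : ∀ K : Finset V, K ⊆ D →
      (GSet T (K.sup Yf)).card ≤ (FSet hpar Z1 (K.sup Yf)).card := by
    intro K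
    induction K using Finset.induction_on with
    | empty =>
      intro _
      have h0 : GSet T ((∅ : Finset V).sup Yf) = ∅ := by
        ext i
        simp [GSet, Finset.sup_empty]
      rw [h0]
      simp
    | @insert a K ha ih =>
      intro hsub
      have hA := tight a (hsub (Finset.mem_insert_self a K))
      have hB := ih (fun x hx => hsub (Finset.mem_insert_of_mem hx))
      have s1 := gcount_submod T (Yf a) (K.sup Yf)
      have s2 := fcount_supermod hpar Z1 (Yf a) (K.sup Yf)
      have s3 := d1 ((Yf a) ∩ (K.sup Yf))
      rw [Finset.sup_insert, Finset.sup_eq_union]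
      omega
  have t0 : (GSet T Ystar).card ≤ (FSet hpar Z1 Ystar).card := tightU D (Finset.Subset.refl D)
  have hYfsub : ∀ z ∈ D, Yf z ⊆ Ystar := fun z hz => Finset.le_sup hz
  have up : ∀ K : Finset V, K ⊆ D →
      (FSet hpar Z1 Ystar).card + K.card ≤ (FSet hpar (Z1 ∪ K) Ystar).card := by
    intro K
    induction K using Finset.induction_on with
    | empty => intro _; rw [Finset.union_empty]; simp
    | @insert a K ha ih =>
      intro hsub
      have haD := hsub (Finset.mem_insert_self a K)
      obtain ⟨ha2, ha1, har⟩ := hDr a haD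
      have hihs := ih (fun x hx => hsub (Finset.mem_insert_of_mem hx))
      have hrZK : r ∉ Z1 ∪ K := by
        rw [Finset.mem_union]
        rintro (h | h)
        · exact h1 h
        · exact h2 (hDr r (hsub (Finset.mem_insert_of_mem h))).1
      have haZK : a ∉ Z1 ∪ K := by
        rw [Finset.mem_union]
        rintro (h | h)
        · exact ha1 h
        · exact ha h
      have hstar' : (∀ u, gtop G r parent hpar (insert a Z1) u = a → u ∈ Ystar) ∨
          (∀ u, gtop G r parent hpar (insert a Z1) u = gtop G r parent hpar Z1 a → u ∈ Ystar) := by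
        rcases star a haD with h | h
        · exact Or.inl fun u hu => hYfsub a haD (h u hu)
        · exact Or.inr fun u hu => hYfsub a haD (h u hu)
      have hstep := step_ge hpar (Finset.subset_union_left) hrZK haZK har hstar'
      rw [← Finset.union_insert] at hstep
      rw [Finset.card_insert_of_notMem ha]
      omega
  have down : ∀ K : Finset V, K ⊆ Z1 \ Z2 →
      (FSet hpar (Z2 ∪ K) Ystar).card ≤ (FSet hpar Z2 Ystar).card + K.card := by
    intro K
    induction K using Finset.induction_on with
    | empty => intro _; rw [Finset.union_empty]; simp
    | @insert a K ha ih =>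
      intro hsub
      have haD := hsub (Finset.mem_insert_self a K)
      rw [Finset.mem_sdiff] at haD
      have har : a ≠ r := fun h => h1 (h ▸ haD.1)
      have hihs := ih (fun x hx => hsub (Finset.mem_insert_of_mem hx))
      have hrZK : r ∉ Z2 ∪ K := by
        rw [Finset.mem_union]
        rintro (h | h)
        · exact h2 h
        · exact h1 (Finset.mem_sdiff.1 (hsub (Finset.mem_insert_of_mem h))).1
      have haZK : a ∉ Z2 ∪ K := by
        rw [Finset.mem_union]
        rintro (h | h)
        · exact haD.2 h
        · exact ha h
      have hstep := step_le hpar hrZK haZK har Ystar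
      rw [← Finset.union_insert] at hstep
      rw [Finset.card_insert_of_notMem ha]
      omega
  have e1 := up D (Finset.Subset.refl D)
  rw [hD, Finset.union_sdiff_self_eq_union] at e1
  have e2 := down (Z1 \ Z2) (Finset.Subset.refl _)
  rw [Finset.union_sdiff_self_eq_union] at e2
  have e3 : Z1 ∪ Z2 = Z2 ∪ Z1 := Finset.union_comm Z1 Z2
  rw [e3] at e1
  have e4 := d2 Ystar
  have c1 : (Z2 \ Z1).card + (Z2 ∩ Z1).card = Z2.card := by
    rw [Finset.card_sdiff_add_card_inter]
  have c2 : (Z1 \ Z2).card + (Z1 ∩ Z2).card = Z1.card := by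
    rw [Finset.card_sdiff_add_card_inter]
  have c3 : Z2 ∩ Z1 = Z1 ∩ Z2 := Finset.inter_comm Z2 Z1
  rw [c3] at c1
  omega

end Counting

theorem toFinset_eq_of_setEq {V : Type*} {s : Set V} [Fintype s] {F : Finset V}
    (h : ∀ x, x ∈ s ↔ x ∈ F) : s.toFinset = F := by
  ext x
  rw [Set.mem_toFinset]
  exact h x

theorem sort_finset (w : Sym2 V → ℝ) (parent : V → V) :
    ∀ (n : ℕ) (S : Finset V), S.card = n →
      ∃ f : Fin n → V, Function.Injective f ∧ (∀ i, f i ∈ S) ∧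
        ∀ i j : Fin n, i ≤ j → w s(f i, parent (f i)) ≤ w s(f j, parent (f j)) := by
  intro n
  induction n with
  | zero => exact fun S h => ⟨Fin.elim0, fun i => i.elim0, fun i => i.elim0, fun i => i.elim0⟩
  | succ k ih =>
    intro S hS
    have hne : S.Nonempty := by rw [← Finset.card_pos, hS]; omega
    obtain ⟨v, hv, hvmax⟩ := S.exists_max_image (fun v => w s(v, parent v)) hne
    obtain ⟨f, hfinj, hfmem, hfmono⟩ := ih (S.erase v)
      (by rw [Finset.card_erase_of_mem hv, hS]; rfl)
    refine ⟨fun i => if h : (i : ℕ) < k then f ⟨i, h⟩ else v, ?_, ?_, ?_⟩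
    · intro i j hij
      by_cases hi : (i : ℕ) < k <;> by_cases hj : (j : ℕ) < k <;>
        simp only [dif_pos, dif_neg, hi, hj] at hij
      · have := hfinj hij
        rw [Fin.mk.injEq] at this
        exact Fin.ext this
      · exact absurd (hij ▸ hfmem ⟨i, hi⟩) (fun h => (Finset.mem_erase.1 h).1 rfl)
      · exact absurd (hij ▸ hfmem ⟨j, hj⟩) (fun h => (Finset.mem_erase.1 h).1 rfl)
      · refine Fin.ext ?_
        have hi' := i.isLt
        have hj' := j.isLt
        omega
    · intro i
      by_cases hi : (i : ℕ) < k
      · simp only [dif_pos hi]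
        exact Finset.erase_subset v S (hfmem ⟨i, hi⟩)
      · simp only [dif_neg hi]
        exact hv
    · intro i j hij
      by_cases hj : (j : ℕ) < k
      · have hi : (i : ℕ) < k := lt_of_le_of_lt hij hj
        simp only [dif_pos hi, dif_pos hj]
        exact hfmono ⟨i, hi⟩ ⟨j, hj⟩ hij
      · simp only [dif_neg hj]
        by_cases hi : (i : ℕ) < k
        · simp only [dif_pos hi]
          exact hvmax _ (Finset.erase_subset v S (hfmem ⟨i, hi⟩))
        · simp only [dif_neg hi]
          exact le_refl _


end Stmt3Aux

/-- The sets `Z ∪ {r}` arising from good cuts on a rooted tree are the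
independent sets of a matroid (a gammoid); consequently the greedy algorithm
that repeatedly adds a minimum-weight edge keeping the cut good computes a
minimum-weight good cut of any prescribed size. -/
theorem stmt3 {V : Type*} [Fintype V] [DecidableEq V]
    (G : SimpleGraph V) (hG : G.IsTree) (r : V)
    (w : Sym2 V → ℝ) (hw : ∀ e, 0 ≤ w e)
    (q : ℕ) (T : Fin q → Set V) (parent : V → V)
    (hpar : ∀ v, v ≠ r → G.Adj v (parent v) ∧ G.dist (parent v) r + 1 = G.dist v r) :
    (∃ M : Matroid V, ∀ Z : Finset V, r ∉ Z →
        (M.Indep ↑(insert r Z) ↔ GoodCut G T parent Z)) ∧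
    (∀ m : ℕ, ∀ zs : ℕ → Finset V, zs 0 = ∅ →
      (∀ n < m, ∃ v, v ∉ zs n ∧ v ≠ r ∧ zs (n + 1) = insert v (zs n) ∧
        GoodCut G T parent (zs (n + 1)) ∧
        ∀ v', v' ∉ zs n → v' ≠ r → GoodCut G T parent (insert v' (zs n)) →
          w s(v, parent v) ≤ w s(v', parent v')) →
      ∀ Z' : Finset V, r ∉ Z' → GoodCut G T parent Z' → Z'.card = m →
        ∑ v ∈ zs m, w s(v, parent v) ≤ ∑ v ∈ Z', w s(v, parent v)) := by
  classical
  have hiff : ∀ Z : Finset V, r ∉ Z →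
      (GoodCut G T parent Z ↔ Stmt3Aux.GoodM G r parent hpar T Z) :=
    fun Z hZ => Stmt3Aux.goodCut_iff_goodM hpar hG T hZ
  have L1 : ∀ {Z Z' : Finset V}, Z' ⊆ Z → r ∉ Z → GoodCut G T parent Z →
      GoodCut G T parent Z' := by
    intro Z Z' hsub hrZ h
    have hrZ' : r ∉ Z' := fun hc => hrZ (hsub hc)
    exact (hiff Z' hrZ').2 (Stmt3Aux.goodM_subset hpar T hsub hrZ ((hiff Z hrZ).1 h))
  have L2 : ∀ {Z1 Z2 : Finset V}, r ∉ Z1 → r ∉ Z2 → GoodCut G T parent Z1 →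
      GoodCut G T parent Z2 → Z1.card < Z2.card →
      ∃ z ∈ Z2, z ∉ Z1 ∧ GoodCut G T parent (insert z Z1) := by
    intro Z1 Z2 h1 h2 g1 g2 hc
    obtain ⟨z, hz2, hz1, hg⟩ :=
      Stmt3Aux.exchangeM hpar T h1 h2 ((hiff _ h1).1 g1) ((hiff _ h2).1 g2) hc
    have hzr : z ≠ r := fun h => h2 (h ▸ hz2)
    have hri : r ∉ insert z Z1 := by simp [h1, Ne.symm hzr]
    exact ⟨z, hz2, hz1, (hiff _ hri).2 hg⟩
  constructor
  · -- the matroid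
    set Indep : Set V → Prop := fun X =>
      X = ∅ ∨ (r ∈ X ∧ ∃ F : Finset V, ↑F = X ∧ GoodCut G T parent (F.erase r)) ∨
        (r ∉ X ∧ ∃ F : Finset V, ↑F = X ∧ GoodCut G T parent F) with hIndep
    have indep_empty : Indep ∅ := Or.inl rfl
    have indep_subset : ∀ ⦃I J : Set V⦄, Indep J → I ⊆ J → Indep I := by
      intro I J hJ hIJ
      rcases hJ with hJ | ⟨hrJ, FJ, hFJ, hgJ⟩ | ⟨hrJ, FJ, hFJ, hgJ⟩
      · exact Or.inl (Set.subset_eq_empty hIJ hJ)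
      · have hF' : (↑(FJ.filter (fun x => x ∈ I)) : Set V) = I := by
          ext x
          simp only [Finset.coe_filter, Set.mem_setOf_eq]
          constructor
          · rintro ⟨-, h⟩; exact h
          · intro h
            refine ⟨?_, h⟩
            have := hIJ h
            rw [← hFJ] at this
            exact Finset.mem_coe.1 this
        by_cases hrI : r ∈ I
        · refine Or.inr (Or.inl ⟨hrI, FJ.filter (fun x => x ∈ I), hF', ?_⟩)
          exact L1 (Finset.erase_subset_erase r (Finset.filter_subset _ _))
            (Finset.notMem_erase r _) hgJ
        · refine Or.inr (Or.inr ⟨hrI, FJ.filter (fun x => x ∈ I), hF', ?_⟩)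
          refine L1 ?_ (Finset.notMem_erase r FJ) hgJ
          intro x hx
          rw [Finset.mem_filter] at hx
          refine Finset.mem_erase.2 ⟨fun h => hrI (h ▸ hx.2), hx.1⟩
      · have hrI : r ∉ I := fun h => hrJ (hIJ h)
        have hrFJ : r ∉ FJ := fun hc => hrJ (by rw [← hFJ]; exact Finset.mem_coe.2 hc)
        have hF' : (↑(FJ.filter (fun x => x ∈ I)) : Set V) = I := by
          ext x
          simp only [Finset.coe_filter, Set.mem_setOf_eq]
          constructor
          · rintro ⟨-, h⟩; exact h
          · intro h
            refine ⟨?_, h⟩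
            have := hIJ h
            rw [← hFJ] at this
            exact Finset.mem_coe.1 this
        exact Or.inr (Or.inr ⟨hrI, FJ.filter (fun x => x ∈ I), hF',
          L1 (Finset.filter_subset _ _) hrFJ hgJ⟩)
    have indep_aug : ∀ ⦃I J : Set V⦄, Indep I → Indep J → I.ncard < J.ncard →
        ∃ e ∈ J, e ∉ I ∧ Indep (insert e I) := by
      intro I J hI hJ hlt
      rcases hJ with hJ | ⟨hrJ, FJ, hFJ, hgJ⟩ | ⟨hrJ, FJ, hFJ, hgJ⟩
      · rw [hJ] at hlt
        simp at hlt
      · -- r ∈ J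
        have hrFJ : r ∈ FJ := by
          rw [← Finset.mem_coe, hFJ]
          exact hrJ
        have hJcard : J.ncard = FJ.card := by rw [← hFJ, Set.ncard_coe_finset]
        rcases hI with hI | ⟨hrI, FI, hFI, hgI⟩ | ⟨hrI, FI, hFI, hgI⟩
        · -- I empty : augment with r
          refine ⟨r, hrJ, by simp [hI], ?_⟩
          refine Or.inr (Or.inl ⟨Set.mem_insert r I, {r}, by simp [hI], ?_⟩)
          rw [Finset.erase_singleton]
          exact L1 (Finset.empty_subset _) (Finset.notMem_erase r _) hgJ
        · -- r ∈ I
          have hrFI : r ∈ FI := by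
            rw [← Finset.mem_coe, hFI]
            exact hrI
          have hIcard : I.ncard = FI.card := by rw [← hFI, Set.ncard_coe_finset]
          rw [hIcard, hJcard] at hlt
          have hcards : (FI.erase r).card < (FJ.erase r).card := by
            rw [Finset.card_erase_of_mem hrFI, Finset.card_erase_of_mem hrFJ]
            have : 0 < FI.card := Finset.card_pos.2 ⟨r, hrFI⟩
            omega
          obtain ⟨z, hz2, hz1, hgz⟩ := L2 (Finset.notMem_erase r _)
            (Finset.notMem_erase r _) hgI hgJ hcards
          obtain ⟨hzr, hzFJ⟩ := Finset.mem_erase.1 hz2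
          refine ⟨z, by rw [← hFJ]; exact Finset.mem_coe.2 hzFJ, ?_, ?_⟩
          · intro hc
            rw [← hFI] at hc
            exact hz1 (Finset.mem_erase.2 ⟨hzr, Finset.mem_coe.1 hc⟩)
          · refine Or.inr (Or.inl ⟨Set.mem_insert_iff.2 (Or.inr hrI), insert z FI,
              by rw [Finset.coe_insert, hFI], ?_⟩)
            rw [Finset.erase_insert_of_ne hzr]
            exact hgz
        · -- r ∉ I : augment with r
          have hrFI : r ∉ FI := fun hc => hrI (by rw [← hFI]; exact Finset.mem_coe.2 hc)
          refine ⟨r, hrJ, hrI, ?_⟩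
          refine Or.inr (Or.inl ⟨Set.mem_insert r I, insert r FI,
            by rw [Finset.coe_insert, hFI], ?_⟩)
          rw [Finset.erase_insert hrFI]
          exact hgI
      · -- r ∉ J
        have hrFJ : r ∉ FJ := fun hc => hrJ (by rw [← hFJ]; exact Finset.mem_coe.2 hc)
        have hJcard : J.ncard = FJ.card := by rw [← hFJ, Set.ncard_coe_finset]
        rcases hI with hI | ⟨hrI, FI, hFI, hgI⟩ | ⟨hrI, FI, hFI, hgI⟩
        · -- I empty
          have hFJne : FJ.Nonempty := by
            rw [← Finset.card_pos]
            rw [hI] at hlt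
            simp only [Set.ncard_empty] at hlt
            omega
          obtain ⟨z, hz⟩ := hFJne
          have hzr : z ≠ r := fun h => hrFJ (h ▸ hz)
          refine ⟨z, by rw [← hFJ]; exact Finset.mem_coe.2 hz, by simp [hI], ?_⟩
          refine Or.inr (Or.inr ⟨?_, {z}, by simp [hI], ?_⟩)
          · rw [hI]
            intro hc
            rcases Set.mem_insert_iff.1 hc with h | h
            · exact hzr h.symm
            · exact Set.notMem_empty r h
          · exact L1 (Finset.singleton_subset_iff.2 hz) hrFJ hgJ
        · -- r ∈ I, r ∉ J
          have hrFI : r ∈ FI := by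
            rw [← Finset.mem_coe, hFI]
            exact hrI
          have hIcard : I.ncard = FI.card := by rw [← hFI, Set.ncard_coe_finset]
          rw [hIcard, hJcard] at hlt
          have hcards : (FI.erase r).card < FJ.card := by
            rw [Finset.card_erase_of_mem hrFI]
            omega
          obtain ⟨z, hz2, hz1, hgz⟩ := L2 (Finset.notMem_erase r _) hrFJ hgI hgJ hcards
          have hzr : z ≠ r := fun h => hrFJ (h ▸ hz2)
          refine ⟨z, by rw [← hFJ]; exact Finset.mem_coe.2 hz2, ?_, ?_⟩
          · intro hc
            rw [← hFI] at hc
            exact hz1 (Finset.mem_erase.2 ⟨hzr, Finset.mem_coe.1 hc⟩)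
          · refine Or.inr (Or.inl ⟨Set.mem_insert_iff.2 (Or.inr hrI), insert z FI,
              by rw [Finset.coe_insert, hFI], ?_⟩)
            rw [Finset.erase_insert_of_ne hzr]
            exact hgz
        · -- r ∉ I, r ∉ J
          have hrFI : r ∉ FI := fun hc => hrI (by rw [← hFI]; exact Finset.mem_coe.2 hc)
          have hIcard : I.ncard = FI.card := by rw [← hFI, Set.ncard_coe_finset]
          rw [hIcard, hJcard] at hlt
          obtain ⟨z, hz2, hz1, hgz⟩ := L2 hrFI hrFJ hgI hgJ hlt
          have hzr : z ≠ r := fun h => hrFJ (h ▸ hz2)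
          refine ⟨z, by rw [← hFJ]; exact Finset.mem_coe.2 hz2, ?_, ?_⟩
          · intro hc
            rw [← hFI] at hc
            exact hz1 (Finset.mem_coe.1 hc)
          · refine Or.inr (Or.inr ⟨?_, insert z FI, by rw [Finset.coe_insert, hFI], hgz⟩)
            rw [Set.mem_insert_iff]
            rintro (h | h)
            · exact hzr h.symm
            · exact hrI h
    have subset_ground : ∀ ⦃I : Set V⦄, Indep I → I ⊆ Set.univ := fun I _ => Set.subset_univ I
    refine ⟨(IndepMatroid.ofFinite Set.finite_univ Indep indep_empty indep_subset
      indep_aug subset_ground).matroid, ?_⟩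
    intro Z hrZ
    rw [IndepMatroid.matroid_indep_iff, IndepMatroid.ofFinite_indep]
    constructor
    · rintro (h | ⟨-, F, hF, hg⟩ | ⟨hr, -⟩)
      · exfalso
        have : r ∈ (↑(insert r Z) : Set V) := by simp
        rw [h] at this
        exact Set.notMem_empty r this
      · have : F = insert r Z := Finset.coe_injective hF
        rw [this, Finset.erase_insert hrZ] at hg
        exact hg
      · exact absurd (by simp : r ∈ (↑(insert r Z) : Set V)) hr
    · intro h
      refine Or.inr (Or.inl ⟨by simp, insert r Z, rfl, ?_⟩)
      rw [Finset.erase_insert hrZ]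
      exact h
  · -- greedy
    intro m zs hzs0 hstep Z' hrZ' hgZ' hcard
    haveI : Nonempty V := hG.isConnected.nonempty
    choose! gv hgv using hstep
    have hfacts : ∀ n, n ≤ m → (zs n).card = n ∧ r ∉ zs n ∧ GoodCut G T parent (zs n) := by
      intro n
      induction n with
      | zero =>
        intro _
        rw [hzs0]
        exact ⟨Finset.card_empty, Finset.notMem_empty r,
          L1 (Finset.empty_subset Z') hrZ' hgZ'⟩
      | succ k ih =>
        intro hk
        have hk' : k < m := hk
        obtain ⟨hv1, hv2, hv3, hv4, -⟩ := hgv k hk'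
        obtain ⟨ih1, ih2, -⟩ := ih (Nat.le_of_lt hk')
        refine ⟨?_, ?_, hv4⟩
        · rw [hv3, Finset.card_insert_of_notMem hv1, ih1]
        · rw [hv3]
          intro hc
          rcases Finset.mem_insert.1 hc with h | h
          · exact hv2 h.symm
          · exact ih2 h
    obtain ⟨f, hfinj, hfmem, hfmono⟩ := Stmt3Aux.sort_finset w parent m Z' hcard
    have hkey : ∀ (k : ℕ) (hk : k < m),
        w s(gv k, parent (gv k)) ≤ w s(f ⟨k, hk⟩, parent (f ⟨k, hk⟩)) := by
      intro k hk
      set W : Finset V := Finset.image (fun i : Fin (k+1) => f (Fin.castLE hk i)) Finset.univ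
        with hW
      have hWinj : Function.Injective fun i : Fin (k+1) => f (Fin.castLE hk i) :=
        hfinj.comp (Fin.castLE_injective hk)
      have hWcard : W.card = k + 1 := by
        rw [hW, Finset.card_image_of_injective _ hWinj, Finset.card_univ, Fintype.card_fin]
      have hWsub : W ⊆ Z' := by
        intro x hx
        rw [hW, Finset.mem_image] at hx
        obtain ⟨i, -, rfl⟩ := hx
        exact hfmem _
      have hrW : r ∉ W := fun hc => hrZ' (hWsub hc)
      have hgW : GoodCut G T parent W := L1 hWsub hrZ' hgZ'
      obtain ⟨hck, hrk, hgk⟩ := hfacts k (Nat.le_of_lt hk)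
      have hcards : (zs k).card < W.card := by omega
      obtain ⟨z, hzW, hzk, hgzk⟩ := L2 hrk hrW hgk hgW hcards
      have hzr : z ≠ r := fun h => hrW (h ▸ hzW)
      have hmin := (hgv k hk).2.2.2.2 z hzk hzr hgzk
      refine le_trans hmin ?_
      rw [hW, Finset.mem_image] at hzW
      obtain ⟨i, -, rfl⟩ := hzW
      refine hfmono (Fin.castLE hk i) ⟨k, hk⟩ ?_
      have := i.isLt
      rw [Fin.le_def]
      simpa using Nat.lt_succ_iff.1 this
    have hsum1 : ∀ n, n ≤ m → ∑ v ∈ zs n, w s(v, parent v) =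
        ∑ i ∈ Finset.range n, w s(gv i, parent (gv i)) := by
      intro n
      induction n with
      | zero => intro _; rw [hzs0]; simp
      | succ k ih =>
        intro hk
        have hk' : k < m := hk
        obtain ⟨hv1, -, hv3, -, -⟩ := hgv k hk'
        rw [hv3, Finset.sum_insert hv1, Finset.sum_range_succ, ih (Nat.le_of_lt hk')]
        ring
    have hZeq : Finset.image f Finset.univ = Z' := by
      apply Finset.eq_of_subset_of_card_le
      · intro x hx
        rw [Finset.mem_image] at hx
        obtain ⟨i, -, rfl⟩ := hx
        exact hfmem i
      · rw [Finset.card_image_of_injective _ hfinj, Finset.card_univ, Fintype.card_fin, hcard]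
    have hsum2 : ∑ v ∈ Z', w s(v, parent v) = ∑ i : Fin m, w s(f i, parent (f i)) := by
      rw [← hZeq, Finset.sum_image]
      intro a _ b _ hab
      exact hfinj hab
    rw [hsum1 m le_rfl, hsum2, ← Fin.sum_univ_eq_sum_range]
    refine Finset.sum_le_sum ?_
    intro i _
    have := hkey i.val i.isLt
    simpa using this
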